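/- A finite set S of SNF clauses is unsatisfiable if, and only if, the reduced behaviour graph of S is empty. In particular, if the reduced behaviour graph is non-empty then a model of S can be constructed as an infinite path through the reduced behaviour graph, starting at an initial node, along which every eventuality occurring in a node of the path is satisfied at that node or at some later node of the path. -/

import Mathlib

/-- A literal over proposition symbols `P`: a proposition symbol (`pos = true`)
or a negated proposition symbol (`pos = false`). -/
structure Lit (P : Type) where
  pos : Bool
  sym : P

/-- The complement of a literal. -/
def Lit.negate {P : Type} (l : Lit P) : Lit P := ⟨!l.pos, l.sym⟩

/-- A literal holds in model `σ` at index `i`. -/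
def Lit.holds {P : Type} (σ : ℕ → Set P) (i : ℕ) (l : Lit P) : Prop :=
  if l.pos then l.sym ∈ σ i else l.sym ∉ σ i

/-- A conjunction of literals holds (the empty conjunction is the constant `true`). -/
def conjHolds {P : Type} (σ : ℕ → Set P) (i : ℕ) (L : List (Lit P)) : Prop :=
  ∀ l ∈ L, Lit.holds σ i l

/-- A disjunction of literals holds. -/
def disjHolds {P : Type} (σ : ℕ → Set P) (i : ℕ) (L : List (Lit P)) : Prop :=
  ∃ l ∈ L, Lit.holds σ i l

/-- SNF clauses: initial clauses `start ⇒ ⋁ rhs`, step clauses `⋀ lhs ⇒ ◯⋁ rhs`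
(an empty `lhs` is the constant `true`), and sometime clauses `⋀ lhs ⇒ ◇ev`. -/
inductive SNF (P : Type) : Type
  | initial (rhs : List (Lit P))
  | step (lhs rhs : List (Lit P))
  | sometime (lhs : List (Lit P)) (ev : Lit P)

/-- Satisfaction of an SNF clause in model `σ` at index `i`. -/
def SNF.holds {P : Type} (σ : ℕ → Set P) (i : ℕ) : SNF P → Prop
  | .initial rhs => i = 0 → disjHolds σ i rhs
  | .step lhs rhs => conjHolds σ i lhs → disjHolds σ (i + 1) rhs
  | .sometime lhs ev => conjHolds σ i lhs → ∃ k, i ≤ k ∧ Lit.holds σ k ev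

/-- `σ` is a model of the clause set `S`, i.e. `(σ,0) ⊨ □⋀_{A ∈ S} A`. -/
def IsModel {P : Type} (σ : ℕ → Set P) (S : Set (SNF P)) : Prop :=
  ∀ (i : ℕ), ∀ c ∈ S, SNF.holds σ i c

/-- The proposition symbols occurring in an SNF clause. -/
def SNF.syms {P : Type} : SNF P → Set P
  | .initial rhs => {p | ∃ l ∈ rhs, Lit.sym l = p}
  | .step lhs rhs => {p | ∃ l ∈ lhs ++ rhs, Lit.sym l = p}
  | .sometime lhs ev => {p | ∃ l ∈ ev :: lhs, Lit.sym l = p}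

/-- The proposition symbols occurring in a clause set. -/
def symsOf {P : Type} (S : Set (SNF P)) : Set P := ⋃ c ∈ S, c.syms

/-- The literals occurring as eventualities (◇l on the right-hand side of
sometime clauses) in `S`. -/
def evLits {P : Type} (S : Set (SNF P)) : Set (Lit P) :=
  {l | ∃ lhs, SNF.sometime lhs l ∈ S}

/-- The positive literal on symbol `p`. -/
def posLit {P : Type} (p : P) : Lit P := ⟨true, p⟩

/-- The augmented clause set `Aug(S)`, where `w l` is the fresh symbol `w_l`
for each eventuality literal `l` of `S`: adds `w_l ⇒ ◯(l ∨ w_l)` and, for each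
sometime clause `C ⇒ ◇l` of `S`, `start ⇒ (¬C ∨ l ∨ w_l)` and `true ⇒ ◯(¬C ∨ l ∨ w_l)`. -/
def Aug {P : Type} (S : Set (SNF P)) (w : Lit P → P) : Set (SNF P) :=
  S ∪ {c | ∃ l ∈ evLits S, c = SNF.step [posLit (w l)] [l, posLit (w l)]}
    ∪ {c | ∃ lhs l, SNF.sometime lhs l ∈ S ∧
          c = SNF.initial (lhs.map Lit.negate ++ [l, posLit (w l)])}
    ∪ {c | ∃ lhs l, SNF.sometime lhs l ∈ S ∧
          c = SNF.step [] (lhs.map Lit.negate ++ [l, posLit (w l)])}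

/-- The symbols `w_l` are fresh: none occurs in `S`, and distinct eventuality
literals receive distinct fresh symbols. -/
def FreshW {P : Type} (S : Set (SNF P)) (w : Lit P → P) : Prop :=
  (∀ l ∈ evLits S, ∀ c ∈ S, w l ∉ SNF.syms c) ∧ Set.InjOn w (evLits S)

/-- A normal model of `Aug(S)`: a model of `Aug(S)` which moreover satisfies
`□(w_l ⇔ (¬l ∧ ◇l))` for each eventuality literal `l` of `S`. -/
def NormalModel {P : Type} (σ : ℕ → Set P) (S : Set (SNF P)) (w : Lit P → P) : Prop :=
  IsModel σ (Aug S w) ∧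
  ∀ (i : ℕ), ∀ l ∈ evLits S,
    (w l ∈ σ i ↔ (¬ Lit.holds σ i l ∧ ∃ k, i ≤ k ∧ Lit.holds σ k l))

/-- A node of the behaviour graph: a valuation `V` (the set of proposition symbols of
`S` made true) together with a set `E` of outstanding eventuality literals. -/
abbrev BNode (P : Type) := Set P × Set (Lit P)

/-- A literal is satisfied by a valuation. -/
def litSatV {P : Type} (V : Set P) (l : Lit P) : Prop :=
  if l.pos then l.sym ∈ V else l.sym ∉ V

/-- A conjunction of literals is satisfied by a valuation (empty = `true`). -/
def conjSatV {P : Type} (V : Set P) (L : List (Lit P)) : Prop := ∀ l ∈ L, litSatV V l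

/-- A disjunction of literals is satisfied by a valuation. -/
def disjSatV {P : Type} (V : Set P) (L : List (Lit P)) : Prop := ∃ l ∈ L, litSatV V l

/-- The eventuality literals of the sometime clauses of `S` fired by valuation `V`. -/
def evSet {P : Type} (S : Set (SNF P)) (V : Set P) : Set (Lit P) :=
  {l | ∃ lhs, SNF.sometime lhs l ∈ S ∧ conjSatV V lhs}

/-- The edge relation of the behaviour graph of `S`: there is an edge from `(V,E)` to
`(V', E' ∪ E″)` whenever `V'` is a valuation over the symbols of `S` satisfying the
right-hand side of every step clause fired by `V`, where `E'` consists of the elements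
of `E` not satisfied by `V` and `E″ = evSet S V'`. -/
def bgEdge {P : Type} (S : Set (SNF P)) (n m : BNode P) : Prop :=
  m.1 ⊆ symsOf S ∧
  (∀ lhs rhs, SNF.step lhs rhs ∈ S → conjSatV n.1 lhs → disjSatV m.1 rhs) ∧
  m.2 = {l ∈ n.2 | ¬ litSatV n.1 l} ∪ evSet S m.1

/-- The initial nodes of the behaviour graph of `S`. -/
def bgInitial {P : Type} (S : Set (SNF P)) (n : BNode P) : Prop :=
  n.1 ⊆ symsOf S ∧ (∀ rhs, SNF.initial rhs ∈ S → disjSatV n.1 rhs) ∧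
  n.2 = evSet S n.1

/-- A node is in the behaviour graph of `S` iff it is reachable from an initial node. -/
def inBG {P : Type} (S : Set (SNF P)) (n : BNode P) : Prop :=
  ∃ n₀, bgInitial S n₀ ∧ Relation.ReflTransGen (bgEdge S) n₀ n

/-- A set `K` of nodes which survives the deletion rules: all its members are nodes of
the behaviour graph, every member has a successor in `K`, and for every member and
every outstanding eventuality `l` of that member, some node of `K` whose valuation
satisfies `l` is reachable from it inside `K`. -/
def goodSet {P : Type} (S : Set (SNF P)) (K : Set (BNode P)) : Prop :=
  (∀ n ∈ K, inBG S n) ∧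
  (∀ n ∈ K, ∃ m ∈ K, bgEdge S n m) ∧
  (∀ n ∈ K, ∀ l ∈ n.2,
    ∃ m ∈ K, Relation.ReflTransGen (fun a b => a ∈ K ∧ b ∈ K ∧ bgEdge S a b) n m ∧
      litSatV m.1 l)

/-- The reduced behaviour graph of `S`: the set of nodes surviving exhaustive
application of the deletion rules, i.e. the largest set closed under the two
survival conditions. -/
def reducedBG {P : Type} (S : Set (SNF P)) : Set (BNode P) :=
  ⋃₀ {K | goodSet S K}

section AuxLemmas

variable {P : Type}

/-- Edge of the behaviour graph restricted to a set `K`. -/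
def edgeK (S : Set (SNF P)) (K : Set (BNode P)) (a b : BNode P) : Prop :=
  a ∈ K ∧ b ∈ K ∧ bgEdge S a b

/-- There is a fair infinite path of behaviour-graph edges starting at `n`. -/
def GoodTail (S : Set (SNF P)) (n : BNode P) : Prop :=
  ∃ F : ℕ → BNode P, F 0 = n ∧ (∀ j, bgEdge S (F j) (F (j+1))) ∧
    (∀ j, ∀ l ∈ (F j).2, ∃ k, j ≤ k ∧ litSatV (F k).1 l)

lemma path_model (S : Set (SNF P)) (M : ℕ → BNode P)
    (h0 : bgInitial S (M 0)) (he : ∀ i, bgEdge S (M i) (M (i+1)))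
    (hf : ∀ i, ∀ l ∈ (M i).2, ∃ k, i ≤ k ∧ litSatV (M k).1 l) :
    IsModel (fun i => (M i).1) S := by
  intro i c hc
  cases c with
  | initial rhs =>
    intro hi; subst hi; exact h0.2.1 rhs hc
  | step lhs rhs =>
    intro h; exact (he i).2.1 lhs rhs hc h
  | sometime lhs ev =>
    intro h
    have hev : ev ∈ (M i).2 := by
      cases i with
      | zero => rw [h0.2.2]; exact ⟨lhs, hc, h⟩
      | succ j => rw [(he j).2.2]; exact Or.inr ⟨lhs, hc, h⟩
    exact hf i ev hev

lemma goodTail_prepend (S : Set (SNF P)) {a b : BNode P} (hab : bgEdge S a b)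
    (hb : GoodTail S b) : GoodTail S a := by
  obtain ⟨F, hF0, hFe, hFf⟩ := hb
  refine ⟨fun j => match j with | 0 => a | (k+1) => F k, rfl, ?_, ?_⟩
  · intro j
    cases j with
    | zero => simpa [hF0] using hab
    | succ k => exact hFe k
  · intro j l hl
    cases j with
    | zero =>
      by_cases hs : litSatV a.1 l
      · exact ⟨0, le_refl 0, hs⟩
      · have hlb : l ∈ (F 0).2 := by
          rw [hF0, hab.2.2]; exact Or.inl ⟨hl, hs⟩
        obtain ⟨k, _, hk⟩ := hFf 0 l hlb
        exact ⟨k+1, Nat.zero_le _, hk⟩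
    | succ j =>
      obtain ⟨k, hk1, hk2⟩ := hFf j l hl
      exact ⟨k+1, Nat.succ_le_succ hk1, hk2⟩

lemma goodTail_of_rtg (S : Set (SNF P)) {a b : BNode P}
    (h : Relation.ReflTransGen (bgEdge S) a b) (hb : GoodTail S b) : GoodTail S a := by
  induction h using Relation.ReflTransGen.head_induction_on with
  | refl => exact hb
  | head hab _ ih => exact goodTail_prepend S hab ih

lemma inBG_snd {S : Set (SNF P)} {n : BNode P} (h : inBG S n) : n.2 ⊆ evLits S := by
  obtain ⟨n₀, h0, hr⟩ := h
  induction hr with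
  | refl => rw [h0.2.2]; rintro l ⟨lhs, h1, -⟩; exact ⟨lhs, h1⟩
  | tail _ hbc ih => rw [hbc.2.2]; rintro l (⟨hl, -⟩ | ⟨lhs, h1, -⟩)
                     exacts [ih hl, ⟨lhs, h1⟩]

/-- The eventuality literals of a single clause. -/
def evOf : SNF P → Set (Lit P)
  | .sometime _ l => {l}
  | _ => ∅

lemma evLits_finite {S : Set (SNF P)} (hS : S.Finite) : (evLits S).Finite := by
  have hsub : evLits S ⊆ ⋃ c ∈ S, evOf c := by
    rintro l ⟨lhs, h⟩
    exact Set.mem_biUnion h (by simp [evOf])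
  exact (hS.biUnion (fun c _ => by cases c <;> simp [evOf])).subset hsub

lemma holds_restrict {σ : ℕ → Set P} {U : Set P} {i : ℕ} {l : Lit P} (h : l.sym ∈ U) :
    Lit.holds (fun j => σ j ∩ U) i l ↔ Lit.holds σ i l := by
  unfold Lit.holds
  cases hp : l.pos <;> simp [h]

lemma isModel_restrict {S : Set (SNF P)} {σ : ℕ → Set P} (hσ : IsModel σ S) :
    IsModel (fun i => σ i ∩ symsOf S) S := by
  intro i c hc
  have hsym : ∀ l : Lit P, l.sym ∈ c.syms → l.sym ∈ symsOf S := fun l hl =>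
    Set.mem_biUnion hc hl
  cases c with
  | initial rhs =>
    intro hi
    obtain ⟨l, hlm, hlh⟩ := hσ i _ hc hi
    exact ⟨l, hlm, (holds_restrict (hsym l ⟨l, hlm, rfl⟩)).mpr hlh⟩
  | step lhs rhs =>
    intro h
    have h' : conjHolds σ i lhs := fun l hl =>
      (holds_restrict (hsym l ⟨l, List.mem_append_left _ hl, rfl⟩)).mp (h l hl)
    obtain ⟨l, hlm, hlh⟩ := hσ i _ hc h'
    exact ⟨l, hlm, (holds_restrict (hsym l ⟨l, List.mem_append_right _ hlm, rfl⟩)).mpr hlh⟩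
  | sometime lhs ev =>
    intro h
    have h' : conjHolds σ i lhs := fun l hl =>
      (holds_restrict (hsym l ⟨l, List.mem_cons_of_mem _ hl, rfl⟩)).mp (h l hl)
    obtain ⟨k, hk, hkh⟩ := hσ i _ hc h'
    exact ⟨k, hk, (holds_restrict (hsym ev ⟨ev, List.mem_cons_self, rfl⟩)).mpr hkh⟩

end AuxLemmas

section FairPath

variable {P : Type}

lemma chain_append_last {α : Type} {R : α → α → Prop} :
    ∀ (l : List α) (a b : α), List.Chain R a l →
      R ((a :: l).getLast (List.cons_ne_nil a l)) b → List.Chain R a (l ++ [b])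
  | [], a, b, _, h => List.Chain.cons (by simpa using h) List.Chain.nil
  | c :: l, a, b, hc, h => by
    rcases List.chain_cons.mp hc with ⟨h1, h2⟩
    refine List.Chain.cons h1 (chain_append_last l c b h2 ?_)
    simpa [List.getLast_cons] using h

/-- The state of the fair scheduler. -/
structure FState (S : Set (SNF P)) (K : Set (BNode P)) where
  node : BNode P
  pend : List (Lit P)
  plan : List (BNode P)
  hnode : node ∈ K
  hchain : List.Chain (edgeK S K) node plan

/-- What a scheduler step must satisfy. -/
def FSpec (S : Set (SNF P)) (K : Set (BNode P)) (els : List (Lit P))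
    (s s' : FState S K) : Prop :=
  edgeK S K s.node s'.node ∧
  (∀ b w', s.plan = b :: w' → s'.node = b ∧ s'.pend = s.pend ∧ s'.plan = w') ∧
  (∀ l ls', s.plan = [] → s.pend = l :: ls' →
     s'.pend = ls' ∧
     (l ∈ s.node.2 → litSatV s.node.1 l ∨ litSatV s'.node.1 l ∨
        ∃ m ∈ s'.plan, litSatV m.1 l)) ∧
  (s.plan = [] → s.pend = [] → s'.pend = els ∧ s'.plan = [])

lemma fspec_exists {S : Set (SNF P)} {K : Set (BNode P)} (hK : goodSet S K)
    (els : List (Lit P)) (s : FState S K) : ∃ s', FSpec S K els s s' := by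
  rcases hplan : s.plan with _ | ⟨b, w'⟩
  · -- plan empty
    rcases hpend : s.pend with _ | ⟨l, ls'⟩
    · -- both empty: reset
      obtain ⟨d, hdK, hde⟩ := hK.2.1 s.node s.hnode
      refine ⟨⟨d, els, [], hdK, List.Chain.nil⟩, ⟨s.hnode, hdK, hde⟩, ?_, ?_, ?_⟩
      · intro b w' h; rw [hplan] at h; exact absurd h (by simp)
      · intro l ls' _ h; rw [hpend] at h; exact absurd h (by simp)
      · intro _ _; exact ⟨rfl, rfl⟩
    · by_cases hl : l ∈ s.node.2
      · obtain ⟨m, hmK, hrtg, hsat⟩ := hK.2.2 s.node s.hnode l hl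
        obtain ⟨c, hc, hlast⟩ := List.exists_isChain_cons_of_relationReflTransGen hrtg
        obtain ⟨d, hdK, hde⟩ := hK.2.1 m hmK
        have hmd : edgeK S K m d := ⟨hmK, hdK, hde⟩
        have hbig : List.Chain (edgeK S K) s.node (c ++ [d]) :=
          chain_append_last c s.node d hc (hlast ▸ hmd)
        rcases c with _ | ⟨b, c'⟩
        · -- m = s.node
          have hms : m = s.node := by simpa using hlast.symm
          refine ⟨⟨d, ls', [], hdK, List.Chain.nil⟩,
            ⟨s.hnode, hdK, hms ▸ hde⟩, ?_, ?_, ?_⟩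
          · intro b w' h; rw [hplan] at h; exact absurd h (by simp)
          · intro l₀ ls₀ _ h
            rw [hpend] at h
            injection h with h1 h2; subst h1; subst h2
            exact ⟨rfl, fun _ => Or.inl (hms ▸ hsat)⟩
          · intro _ h; rw [hpend] at h; exact absurd h (by simp)
        · -- nontrivial walk
          rcases List.chain_cons.mp hbig with ⟨h1, h2⟩
          refine ⟨⟨b, ls', c' ++ [d], h1.2.1, h2⟩, h1, ?_, ?_, ?_⟩
          · intro b₀ w₀ h; rw [hplan] at h; exact absurd h (by simp)
          · intro l₀ ls₀ _ h
            rw [hpend] at h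
            injection h with h1 h2; subst h1; subst h2
            refine ⟨rfl, fun _ => ?_⟩
            have hmem : m ∈ s.node :: b :: c' := hlast ▸ List.getLast_mem _
            rcases List.mem_cons.mp hmem with h | hmem2
            · exact Or.inl (h ▸ hsat)
            rcases List.mem_cons.mp hmem2 with h | h
            · exact Or.inr (Or.inl (h ▸ hsat))
            · exact Or.inr (Or.inr ⟨m, List.mem_append_left _ h, hsat⟩)
          · intro _ h; rw [hpend] at h; exact absurd h (by simp)
      · -- l not outstanding: single step
        obtain ⟨d, hdK, hde⟩ := hK.2.1 s.node s.hnode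
        refine ⟨⟨d, ls', [], hdK, List.Chain.nil⟩, ⟨s.hnode, hdK, hde⟩, ?_, ?_, ?_⟩
        · intro b w' h; rw [hplan] at h; exact absurd h (by simp)
        · intro l₀ ls₀ _ h
          rw [hpend] at h
          injection h with h1 h2; subst h1; subst h2
          exact ⟨rfl, fun hmem => absurd hmem hl⟩
        · intro _ h; rw [hpend] at h; exact absurd h (by simp)
  · -- plan = b :: w' : follow the plan
    have hch : List.Chain (edgeK S K) s.node (b :: w') := hplan ▸ s.hchain
    rcases List.chain_cons.mp hch with ⟨h1, h2⟩
    refine ⟨⟨b, s.pend, w', h1.2.1, h2⟩, h1, ?_, ?_, ?_⟩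
    · intro b₀ w₀ h
      rw [hplan] at h
      injection h with h1 h2; subst h1; subst h2
      exact ⟨rfl, rfl, rfl⟩
    · intro _ _ h; rw [hplan] at h; exact absurd h (by simp)
    · intro h; rw [hplan] at h; exact absurd h (by simp)

lemma fair_path {S : Set (SNF P)} {K : Set (BNode P)} (hK : goodSet S K)
    (hfin : (evLits S).Finite) {n : BNode P} (hn : n ∈ K) : GoodTail S n := by
  classical
  obtain ⟨els, hels⟩ : ∃ L : List (Lit P), ∀ l ∈ evLits S, l ∈ L :=
    ⟨hfin.toFinset.toList, fun l hl => Finset.mem_toList.mpr (hfin.mem_toFinset.mpr hl)⟩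
  choose f hf using fspec_exists hK els
  let st : ℕ → FState S K := fun j => Nat.rec ⟨n, [], [], hn, List.Chain.nil⟩ (fun _ s => f s) j
  have hst : ∀ j, st (j+1) = f (st j) := fun j => rfl
  have hspec : ∀ j, FSpec S K els (st j) (st (j+1)) := fun j => hf (st j)
  -- F1: edges
  have hedge : ∀ j, edgeK S K (st j).node (st (j+1)).node := fun j => (hspec j).1
  -- F3: plan entries are future nodes
  have hfuture : ∀ (idx j : ℕ) (m : BNode P), (st j).plan[idx]? = some m →
      (st (j+1+idx)).node = m := by
    intro idx
    induction idx with
    | zero =>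
      intro j m hm
      rcases hp : (st j).plan with _ | ⟨b, w'⟩
      · rw [hp] at hm; simp at hm
      · rw [hp] at hm
        simp only [List.getElem?_cons_zero, Option.some_inj] at hm
        subst hm
        exact ((hspec j).2.1 b w' hp).1
    | succ idx ih =>
      intro j m hm
      rcases hp : (st j).plan with _ | ⟨b, w'⟩
      · rw [hp] at hm; simp at hm
      · obtain ⟨-, -, hw⟩ := (hspec j).2.1 b w' hp
        rw [hp] at hm
        simp only [List.getElem?_cons_succ] at hm
        rw [← hw] at hm
        have := ih (j+1) m hm
        have harith : j + 1 + (idx + 1) = (j + 1) + 1 + idx := by omega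
        rw [harith, this]
  -- F4: drain the plan
  have hdrain : ∀ (w : List (BNode P)) (j), (st j).plan = w →
      ∃ k, j ≤ k ∧ (st k).plan = [] ∧ (st k).pend = (st j).pend := by
    intro w
    induction w with
    | nil => intro j h; exact ⟨j, le_refl j, h, rfl⟩
    | cons b w' ih =>
      intro j h
      obtain ⟨-, hpend, hplan⟩ := (hspec j).2.1 b w' h
      obtain ⟨k, hk1, hk2, hk3⟩ := ih (j+1) hplan
      exact ⟨k, by omega, hk2, by rw [hk3, hpend]⟩
  -- F5: reach each pending literal
  have hserve : ∀ (s : List (Lit P)) (j), (st j).plan = [] → (st j).pend = s →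
      ∀ l ∈ s, ∃ k, j ≤ k ∧ (st k).plan = [] ∧ ∃ r, (st k).pend = l :: r := by
    intro s
    induction s with
    | nil => intro j _ _ l hl; exact absurd hl List.not_mem_nil
    | cons l' s' ih =>
      intro j hplan hpend l hl
      rcases List.mem_cons.mp hl with rfl | hl'
      · exact ⟨j, le_refl j, hplan, s', hpend⟩
      · have hpend' : (st (j+1)).pend = s' := ((hspec j).2.2.1 l' s' hplan hpend).1
        obtain ⟨k₁, hk₁, hk₁p, hk₁pd⟩ := hdrain (st (j+1)).plan (j+1) rfl
        rw [hpend'] at hk₁pd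
        obtain ⟨k, hk1, hk2, hk3⟩ := ih k₁ hk₁p hk₁pd l hl'
        exact ⟨k, by omega, hk2, hk3⟩
  -- F6: reach the empty state from anywhere
  have hreset0 : ∀ (p : ℕ) (j), (st j).plan = [] → (st j).pend.length ≤ p →
      ∃ k, j ≤ k ∧ (st k).plan = [] ∧ (st k).pend = [] := by
    intro p
    induction p with
    | zero =>
      intro j hplan hlen
      exact ⟨j, le_refl j, hplan, List.length_eq_zero_iff.mp (Nat.le_zero.mp hlen)⟩
    | succ p ih =>
      intro j hplan hlen
      rcases hpend : (st j).pend with _ | ⟨l, ls'⟩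
      · exact ⟨j, le_refl j, hplan, hpend⟩
      · have hpend' : (st (j+1)).pend = ls' := ((hspec j).2.2.1 l ls' hplan hpend).1
        obtain ⟨k₁, hk₁, hk₁p, hk₁pd⟩ := hdrain (st (j+1)).plan (j+1) rfl
        have hlen' : (st k₁).pend.length ≤ p := by
          rw [hk₁pd, hpend']
          rw [hpend] at hlen
          simp only [List.length_cons] at hlen
          omega
        obtain ⟨k, hk1, hk2, hk3⟩ := ih k₁ hk₁p hlen'
        exact ⟨k, by omega, hk2, hk3⟩
  have hreset : ∀ j, ∃ k, j ≤ k ∧ (st k).plan = [] ∧ (st k).pend = [] := by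
    intro j
    obtain ⟨k₁, hk₁, hk₁p, -⟩ := hdrain (st j).plan j rfl
    obtain ⟨k, hk1, hk2, hk3⟩ := hreset0 (st k₁).pend.length k₁ hk₁p (le_refl _)
    exact ⟨k, by omega, hk2, hk3⟩
  -- assemble GoodTail
  refine ⟨fun j => (st j).node, rfl, fun j => (hedge j).2.2, ?_⟩
  intro j l hl
  by_contra hnever
  push_neg at hnever
  have hnever' : ∀ k, j ≤ k → ¬ litSatV ((st k).node).1 l := fun k hk hs =>
    hnever k hk hs
  -- persistence
  have hpers : ∀ k, j ≤ k → l ∈ ((st k).node).2 := by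
    intro k hk
    induction k, hk using Nat.le_induction with
    | base => exact hl
    | succ k hk ih =>
      rw [(hedge k).2.2.2.2]
      exact Or.inl ⟨ih, hnever' k hk⟩
  have hlels : l ∈ els := hels l (inBG_snd (hK.1 _ (st j).hnode) hl)
  obtain ⟨k₀, hk₀, hk₀p, hk₀pd⟩ := hreset j
  have hafter : (st (k₀+1)).pend = els ∧ (st (k₀+1)).plan = [] :=
    (hspec k₀).2.2.2 hk₀p hk₀pd
  obtain ⟨k, hk1, hk2, r, hk3⟩ := hserve els (k₀+1) hafter.2 hafter.1 l hlels
  have hkj : j ≤ k := by omega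
  have hsat := ((hspec k).2.2.1 l r hk2 hk3).2 (hpers k hkj)
  rcases hsat with h | h | ⟨m, hm, hsat⟩
  · exact hnever' k hkj h
  · exact hnever' (k+1) (by omega) h
  · obtain ⟨idx, hidx⟩ := List.mem_iff_getElem?.mp hm
    have := hfuture idx (k+1) m hidx
    exact hnever' (k+1+1+idx) (by omega) (this ▸ hsat)
end FairPath

section MainLemmas

variable {P : Type}

lemma nonempty_model {S : Set (SNF P)} (hS : S.Finite) {K : Set (BNode P)}
    (hK : goodSet S K) {n : BNode P} (hn : n ∈ K) :
    ∃ σ : ℕ → Set P, IsModel σ S := by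
  have hGT : GoodTail S n := fair_path hK (evLits_finite hS) hn
  obtain ⟨n₀, hinit, hrtg⟩ := hK.1 n hn
  obtain ⟨F, hF0, hFe, hFf⟩ := goodTail_of_rtg S hrtg hGT
  exact ⟨fun i => (F i).1, path_model S F (hF0 ▸ hinit) hFe hFf⟩

lemma model_path {S : Set (SNF P)} {σ : ℕ → Set P} (hσ : IsModel σ S) :
    ∃ N : ℕ → BNode P,
      (∀ i, N i ∈ reducedBG S) ∧ bgInitial S (N 0) ∧
      (∀ i, bgEdge S (N i) (N (i+1))) ∧
      (∀ i, ∀ l ∈ (N i).2, ∃ k, i ≤ k ∧ litSatV (N k).1 l) ∧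
      IsModel (fun i => (N i).1) S := by
  classical
  set σ' : ℕ → Set P := fun i => σ i ∩ symsOf S with hσ'def
  have hσ' : IsModel σ' S := isModel_restrict hσ
  let E : ℕ → Set (Lit P) := fun i => Nat.rec (evSet S (σ' 0))
    (fun j Ej => {l ∈ Ej | ¬ litSatV (σ' j) l} ∪ evSet S (σ' (j+1))) i
  let N : ℕ → BNode P := fun i => (σ' i, E i)
  have hinit : bgInitial S (N 0) :=
    ⟨Set.inter_subset_right, fun rhs h => hσ' 0 _ h rfl, rfl⟩
  have hedge : ∀ i, bgEdge S (N i) (N (i+1)) := fun i =>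
    ⟨Set.inter_subset_right, fun lhs rhs hc h => hσ' i _ hc h, rfl⟩
  have hfair : ∀ i, ∀ l ∈ E i, ∃ k, i ≤ k ∧ litSatV (σ' k) l := by
    intro i
    induction i with
    | zero =>
      rintro l ⟨lhs, hc, hconj⟩
      exact hσ' 0 _ hc hconj
    | succ i ih =>
      rintro l (⟨hl, hns⟩ | ⟨lhs, hc, hconj⟩)
      · obtain ⟨k, hk1, hk2⟩ := ih l hl
        rcases Nat.eq_or_lt_of_le hk1 with rfl | hlt
        · exact absurd hk2 hns
        · exact ⟨k, hlt, hk2⟩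
      · exact hσ' (i+1) _ hc hconj
  have hrtg0 : ∀ i, Relation.ReflTransGen (bgEdge S) (N 0) (N i) := by
    intro i
    induction i with
    | zero => exact Relation.ReflTransGen.refl
    | succ i ih => exact ih.tail (hedge i)
  have hgood : goodSet S (Set.range N) := by
    refine ⟨?_, ?_, ?_⟩
    · rintro m ⟨i, rfl⟩
      exact ⟨N 0, hinit, hrtg0 i⟩
    · rintro m ⟨i, rfl⟩
      exact ⟨N (i+1), ⟨i+1, rfl⟩, hedge i⟩
    · rintro m ⟨i, rfl⟩ l hl
      obtain ⟨k, hk1, hk2⟩ := hfair i l hl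
      refine ⟨N k, ⟨k, rfl⟩, ?_, hk2⟩
      have : ∀ d, Relation.ReflTransGen
          (fun a b => a ∈ Set.range N ∧ b ∈ Set.range N ∧ bgEdge S a b) (N i) (N (i+d)) := by
        intro d
        induction d with
        | zero => exact Relation.ReflTransGen.refl
        | succ d ih => exact ih.tail ⟨⟨i+d, rfl⟩, ⟨i+d+1, rfl⟩, hedge (i+d)⟩
      have hik : i + (k - i) = k := by omega
      exact hik ▸ this (k - i)
  refine ⟨N, fun i => Set.mem_sUnion.mpr ⟨Set.range N, hgood, ⟨i, rfl⟩⟩,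
    hinit, hedge, hfair, hσ'⟩

end MainLemmas


/-- a finite set `S` of SNF clauses is unsatisfiable iff its reduced
behaviour graph is empty; in particular, if the reduced behaviour graph is non-empty
then a model of `S` is obtained as an infinite path through the reduced behaviour
graph, starting at an initial node, along which every eventuality occurring in a node
of the path is satisfied at that node or at some later node. -/
theorem stmt_13 {P : Type} [Countable P] (S : Set (SNF P)) (hS : S.Finite) :
    ((¬ ∃ σ : ℕ → Set P, IsModel σ S) ↔ reducedBG S = ∅) ∧
    (reducedBG S ≠ ∅ →
      ∃ N : ℕ → BNode P,
        (∀ i : ℕ, N i ∈ reducedBG S) ∧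
        bgInitial S (N 0) ∧
        (∀ i : ℕ, bgEdge S (N i) (N (i + 1))) ∧
        (∀ i : ℕ, ∀ l ∈ (N i).2, ∃ k, i ≤ k ∧ litSatV (N k).1 l) ∧
        IsModel (fun i => (N i).1) S) := by
  have hne : reducedBG S ≠ ∅ → ∃ σ : ℕ → Set P, IsModel σ S := by
    intro h
    obtain ⟨n, hn⟩ := Set.nonempty_iff_ne_empty.mpr h
    obtain ⟨K, hK, hnK⟩ := Set.mem_sUnion.mp hn
    exact nonempty_model hS hK hnK
  constructor
  · constructor
    · intro hns
      by_contra h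
      exact hns (hne h)
    · intro h hex
      obtain ⟨σ, hσ⟩ := hex
      obtain ⟨N, hN, -⟩ := model_path hσ
      have := hN 0
      rw [h] at this
      exact this
  · intro h
    obtain ⟨σ, hσ⟩ := hne h
    exact model_path hσ
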